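/- For every k ≥ 1, the projective cube PC_{2k} has no odd cycle of length less than 2k+1, i.e., its odd-girth is exactly 2k+1. -/

import Mathlib

def projCube (d : ℕ) : SimpleGraph (Fin d → ZMod 2) where
  Adj u v := u ≠ v ∧ ((∃ i, u + v = Pi.single i 1) ∨ u + v = fun _ => 1)
  symm := ⟨by
    rintro u v ⟨h1, h2⟩
    exact ⟨h1.symm, by rwa [add_comm] at h2⟩⟩
  loopless := ⟨by rintro u ⟨h, -⟩; exact h rfl⟩

lemma sum_eq_countP_mod2 (M : List (ZMod 2)) :
    M.sum = ((M.countP (· = 1) : ℕ) : ZMod 2) := by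
  induction M with
  | nil => simp
  | cons a M ih =>
    have h := (show ∀ x : ZMod 2, x = 0 ∨ x = 1 by decide) a
    rcases h with h | h <;> simp [List.countP_cons, h, ih, add_comm]

section
variable {k : ℕ}

lemma single_inj (i j : Fin (2*k)) (h : (Pi.single i 1 : Fin (2*k) → ZMod 2) = Pi.single j 1) :
    i = j := by
  by_contra hne
  have := congrFun h i
  rw [Pi.single_eq_same, Pi.single_eq_of_ne hne] at this
  exact one_ne_zero (α := ZMod 2) this

lemma J_ne_single (hk : 1 ≤ k) (i : Fin (2*k)) :
    (fun _ => 1 : Fin (2*k) → ZMod 2) ≠ Pi.single i 1 := by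
  have hcard : 1 < Fintype.card (Fin (2*k)) := by simp; omega
  obtain ⟨j, hj⟩ := Fintype.exists_ne_of_one_lt_card hcard i
  intro h
  have := congrFun h j
  rw [Pi.single_eq_of_ne hj] at this
  exact one_ne_zero this

lemma key (hk : 1 ≤ k) (L : List (Fin (2*k) → ZMod 2))
    (hmem : ∀ x ∈ L, (∃ i, x = Pi.single i 1) ∨ x = fun _ => 1)
    (hsum : L.sum = 0) (hodd : Odd L.length) : 2*k+1 ≤ L.length := by
  classical
  -- Claim A: countP (x i = 1) = count J + count (e i)
  have claimA : ∀ i : Fin (2*k), ∀ M : List (Fin (2*k) → ZMod 2),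
      (∀ x ∈ M, (∃ i, x = Pi.single i 1) ∨ x = fun _ => 1) →
      M.countP (fun x => x i = 1) = M.count (fun _ => 1) + M.count (Pi.single i 1) := by
    intro i M
    induction M with
    | nil => simp
    | cons a M ih =>
      intro hm
      have ha := hm a (by simp)
      have hM : ∀ x ∈ M, (∃ i, x = Pi.single i 1) ∨ x = fun _ => 1 :=
        fun x hx => hm x (by simp [hx])
      rcases ha with ⟨j, rfl⟩ | rfl
      · by_cases hij : i = j
        · subst hij
          rw [List.countP_cons_of_pos (p := fun x => decide (x i = 1)) (a := Pi.single i 1) (by simp), List.count_cons_self,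
            List.count_cons_of_ne (J_ne_single hk i).symm, ih hM]
          omega
        · rw [List.countP_cons_of_neg (p := fun x => decide (x i = 1)) (a := Pi.single j 1) (by simp [Pi.single_eq_of_ne hij]),
            List.count_cons_of_ne (J_ne_single hk j).symm,
            List.count_cons_of_ne (fun h => hij (single_inj i j h.symm)), ih hM]
      · rw [List.countP_cons_of_pos (p := fun x => decide (x i = 1)) (a := (fun _ => 1 : Fin (2*k) → ZMod 2)) (by simp), List.count_cons_self,
          List.count_cons_of_ne (J_ne_single hk i), ih hM]
        omega
  -- Claim B: length = count J + ∑ i, count (e i)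
  have claimB : ∀ M : List (Fin (2*k) → ZMod 2),
      (∀ x ∈ M, (∃ i, x = Pi.single i 1) ∨ x = fun _ => 1) →
      M.length = M.count (fun _ => 1) + ∑ i : Fin (2*k), M.count (Pi.single i 1) := by
    intro M
    induction M with
    | nil => simp
    | cons a M ih =>
      intro hm
      have ha := hm a (by simp)
      have hM : ∀ x ∈ M, (∃ i, x = Pi.single i 1) ∨ x = fun _ => 1 :=
        fun x hx => hm x (by simp [hx])
      rcases ha with ⟨j, rfl⟩ | rfl
      · rw [List.length_cons, List.count_cons_of_ne (J_ne_single hk j).symm, ih hM]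
        have hc : ∀ i : Fin (2*k), (Pi.single j 1 :: M).count (Pi.single i 1)
            = M.count (Pi.single i 1) + if i = j then 1 else 0 := by
          intro i
          rw [List.count_cons]
          simp only [beq_iff_eq]
          congr 1
          by_cases hij : i = j
          · simp [hij]
          · rw [if_neg (fun h => hij (single_inj j i h).symm), if_neg hij]
        rw [Finset.sum_congr rfl (fun i _ => hc i), Finset.sum_add_distrib,
          Finset.sum_ite_eq' Finset.univ j (fun _ => 1)]
        simp; omega
      · rw [List.length_cons, List.count_cons_self, ih hM]
        have hc : ∀ i : Fin (2*k),
            ((fun _ => 1 : Fin (2*k) → ZMod 2) :: M).count (Pi.single i 1)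
            = M.count (Pi.single i 1) := by
          intro i; exact List.count_cons_of_ne (J_ne_single hk i)
        rw [Finset.sum_congr rfl (fun i _ => hc i)]
        omega
  -- Claim C: parity
  have claimC : ∀ i : Fin (2*k),
      ((L.count (fun _ => 1) + L.count (Pi.single i 1) : ℕ) : ZMod 2) = 0 := by
    intro i
    have h1 : L.sum i = 0 := by rw [hsum]; rfl
    have h2 : ∀ M : List (Fin (2*k) → ZMod 2), (M.map (· i)).sum = M.sum i := by
      intro M
      induction M with
      | nil => simp
      | cons a M ih => simp [ih]
    rw [← h2 L, sum_eq_countP_mod2, List.countP_map] at h1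
    rw [← claimA i L hmem]
    convert h1 using 3
    rfl
  rcases (show ∀ x : ZMod 2, x = 0 ∨ x = 1 by decide) (L.count (fun _ => 1) : ZMod 2)
    with h0 | h1
  · -- t even → all counts even → length even, contradiction
    exfalso
    have hse : ∀ i : Fin (2*k), 2 ∣ L.count (Pi.single i 1) := by
      intro i
      have := claimC i
      rw [Nat.cast_add, h0, zero_add] at this
      exact (ZMod.natCast_eq_zero_iff _ 2).mp this
    have hte : 2 ∣ L.count (fun _ => 1) := (ZMod.natCast_eq_zero_iff _ 2).mp h0
    have hlen := claimB L hmem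
    rw [Nat.not_even_iff_odd.symm] at hodd
    apply hodd
    rw [hlen]
    exact Even.add (even_iff_two_dvd.mpr hte)
      (even_iff_two_dvd.mpr (Finset.dvd_sum (fun i _ => hse i)))
  · -- t odd: t ≥ 1 and each count ≥ 1
    have hs1 : ∀ i : Fin (2*k), 1 ≤ L.count (Pi.single i 1) := by
      intro i
      rcases Nat.eq_zero_or_pos (L.count (Pi.single i 1)) with h | h
      · exfalso
        have := claimC i
        rw [h, Nat.cast_add, h1, Nat.cast_zero, add_zero] at this
        exact one_ne_zero this
      · exact h
    have ht1 : 1 ≤ L.count (fun _ => 1 : Fin (2*k) → ZMod 2) := by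
      rcases Nat.eq_zero_or_pos (L.count (fun _ => 1 : Fin (2*k) → ZMod 2)) with h | h
      · exfalso; rw [h] at h1; simp at h1
      · exact h
    have hlen := claimB L hmem
    have hsum' : 2*k ≤ ∑ i : Fin (2*k), L.count (Pi.single i 1) := by
      calc 2*k = ∑ _i : Fin (2*k), 1 := by simp
      _ ≤ _ := Finset.sum_le_sum (fun i _ => hs1 i)
    omega

end

theorem projCube_odd_girth (k : ℕ) (hk : 1 ≤ k) :
    ∀ (v : Fin (2 * k) → ZMod 2) (c : (projCube (2 * k)).Walk v v),
      c.IsCycle → Odd c.length → 2 * k + 1 ≤ c.length := by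
  intro v c _ hodd
  have hself : ∀ x : Fin (2*k) → ZMod 2, x + x = 0 := by
    intro x; funext i; exact CharTwo.add_self_eq_zero _
  have hsum : ∀ (u w : Fin (2*k) → ZMod 2) (p : (projCube (2*k)).Walk u w),
      (p.darts.map (fun d => d.fst + d.snd)).sum = u + w := by
    intro u w p
    induction p with
    | nil => simp [hself]
    | @cons a b c' hadj p ih =>
      simp only [SimpleGraph.Walk.darts_cons, List.map_cons, List.sum_cons, ih]
      rw [show a + b + (b + c') = a + (b + b) + c' by ring, hself, add_zero]
  have hmem : ∀ x ∈ c.darts.map (fun d => d.fst + d.snd),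
      (∃ i, x = Pi.single i 1) ∨ x = fun _ => 1 := by
    intro x hx
    rw [List.mem_map] at hx
    obtain ⟨d, hd, rfl⟩ := hx
    have := d.adj
    rcases this.2 with ⟨i, hi⟩ | hJ
    · exact Or.inl ⟨i, hi⟩
    · exact Or.inr hJ
  have hL : (c.darts.map (fun d => d.fst + d.snd)).length = c.length := by simp
  have := key hk (c.darts.map (fun d => d.fst + d.snd)) hmem
    (by rw [hsum v v c, hself]) (by rwa [hL])
  rwa [hL] at this
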